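/- If a sequence (t_n) of reals satisfies t_0 = 1, t_n ≥ (n+2)/2 for all n, and t_n^2 ≥ t_{n+1}^2 − t_{n+1} for all n, then (t_n − 1)/t_{n+1} → 1 as n → ∞. -/

import Mathlib

open Filter Finset

theorem fista_param_ratio_tendsto_one (t : ℕ → ℝ)
    (h0 : t 0 = 1)
    (h1 : ∀ n : ℕ, t n ≥ ((n : ℝ) + 2) / 2)
    (h2 : ∀ n : ℕ, (t n) ^ 2 ≥ (t (n + 1)) ^ 2 - t (n + 1)) :
    Filter.Tendsto (fun n : ℕ => (t n - 1) / t (n + 1)) Filter.atTop (nhds 1) := by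
  have hpos : ∀ n : ℕ, 0 < t n := fun n =>
    lt_of_lt_of_le (by positivity) (h1 n)
  -- key step bound
  have key : ∀ n : ℕ, t (n + 1) ≤ t n + 1/2 + 1/(2*((n:ℝ)+2)) := by
    intro n
    by_contra h
    push_neg at h
    set c : ℝ := 1/(2*((n:ℝ)+2)) with hc
    have hn : (0:ℝ) < (n:ℝ) + 2 := by positivity
    have hcc : 0 < c := by positivity
    have htc : t n * c ≥ 1/4 := by
      have h1' : t n * c ≥ (((n:ℝ)+2)/2) * c :=
        mul_le_mul_of_nonneg_right (h1 n) hcc.le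
      have : (((n:ℝ)+2)/2) * c = 1/4 := by
        rw [hc]; field_simp; ring
      linarith
    have ha := h2 n
    have hb := h1 n
    nlinarith [mul_pos (by linarith : (0:ℝ) < t (n+1) - 1/2 - (t n + c))
      (by linarith : (0:ℝ) < t (n+1) - 1/2 + (t n + c)), sq_nonneg c]
  set S : ℕ → ℝ := fun n => ∑ k ∈ range n, 1/(2*((k:ℝ)+2)) with hSdef
  have hup : ∀ n : ℕ, t n ≤ 1 + (n:ℝ)/2 + S n := by
    intro n
    induction n with
    | zero => simp [h0, hSdef]
    | succ m ih =>
      have hk := key m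
      have hS : S (m+1) = S m + 1/(2*((m:ℝ)+2)) := by
        simp [hSdef, Finset.sum_range_succ]
      push_cast
      rw [hS]
      linarith
  -- S n / n → 0
  have hcesaro : Tendsto (fun n : ℕ => ((n:ℝ))⁻¹ * S n) atTop (nhds 0) := by
    simp only [hSdef]
    apply Filter.Tendsto.cesaro
    have ha' : Tendsto (fun n : ℕ => ((n:ℝ)+2)) atTop atTop :=
      tendsto_atTop_add_const_right atTop 2 tendsto_natCast_atTop_atTop
    have h2n : Tendsto (fun n : ℕ => 2*((n:ℝ)+2)) atTop atTop :=
      ha'.const_mul_atTop (by norm_num)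
    exact Filter.Tendsto.div_atTop tendsto_const_nhds h2n
  -- t n / n → 1/2
  have htn : Tendsto (fun n : ℕ => t n / n) atTop (nhds (1/2)) := by
    have hlow : Tendsto (fun n : ℕ => 1/2 + 1/(n:ℝ)) atTop (nhds (1/2)) := by
      simpa using (tendsto_const_nhds (x := (1:ℝ)/2)).add
        tendsto_one_div_atTop_nhds_zero_nat
    have hhigh : Tendsto (fun n : ℕ => 1/(n:ℝ) + 1/2 + ((n:ℝ))⁻¹ * S n)
        atTop (nhds (1/2)) := by
      have := (tendsto_one_div_atTop_nhds_zero_nat.add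
        (tendsto_const_nhds (x := (1:ℝ)/2))).add hcesaro
      simpa using this
    refine tendsto_of_tendsto_of_tendsto_of_le_of_le' hlow hhigh ?_ ?_
    · filter_upwards [eventually_ge_atTop 1] with n hn
      have hn' : (0:ℝ) < n := by exact_mod_cast hn
      rw [le_div_iff₀ hn']
      have heq : (1/2 + 1/(n:ℝ)) * n = ((n:ℝ)+2)/2 := by
        field_simp
      rw [heq]; exact h1 n
    · filter_upwards [eventually_ge_atTop 1] with n hn
      have hn' : (0:ℝ) < n := by exact_mod_cast hn
      rw [div_le_iff₀ hn']
      have heq : (1/(n:ℝ) + 1/2 + ((n:ℝ))⁻¹ * S n) * n = 1 + (n:ℝ)/2 + S n := by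
        field_simp
      rw [heq]; exact hup n
  -- (t n - 1)/n → 1/2
  have hA : Tendsto (fun n : ℕ => (t n - 1) / n) atTop (nhds (1/2)) := by
    have := htn.sub tendsto_one_div_atTop_nhds_zero_nat
    simpa [sub_div] using this
  -- t (n+1)/n → 1/2
  have hB : Tendsto (fun n : ℕ => t (n + 1) / n) atTop (nhds (1/2)) := by
    have hc : Tendsto (fun n : ℕ => t (n+1) / ((n:ℝ)+1)) atTop (nhds (1/2)) := by
      have := htn.comp (tendsto_add_atTop_nat 1)
      simp only [Function.comp_def] at this
      push_cast at this
      exact this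
    have hr : Tendsto (fun n : ℕ => ((n:ℝ)+1)/n) atTop (nhds 1) := by
      have : Tendsto (fun n : ℕ => 1 + 1/(n:ℝ)) atTop (nhds 1) := by
        simpa using (tendsto_const_nhds (x := (1:ℝ))).add
          tendsto_one_div_atTop_nhds_zero_nat
      refine this.congr' ?_
      filter_upwards [eventually_ge_atTop 1] with n hn
      have hn' : (0:ℝ) < n := by exact_mod_cast hn
      field_simp
    have := hc.mul hr
    have heq : ∀ n : ℕ, (t (n+1) / ((n:ℝ)+1)) * (((n:ℝ)+1)/n) = t (n+1) / n := by
      intro n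
      have h1' : ((n:ℝ)+1) ≠ 0 := by positivity
      rw [div_mul_div_comm, mul_comm (t (n+1)) _, mul_div_mul_left _ _ h1']
    simpa using (hc.mul hr).congr heq
  have hfin := hA.div hB (by norm_num)
  have hone : (1:ℝ) = (1/2)/(1/2) := by norm_num
  rw [hone]
  refine hfin.congr' ?_
  filter_upwards [eventually_ge_atTop 1] with n hn
  have hn0 : (n:ℝ) ≠ 0 := by
    have : (0:ℝ) < n := by exact_mod_cast hn
    exact this.ne'
  have ht0 : t (n+1) ≠ 0 := (hpos (n+1)).ne'
  rw [Pi.div_apply]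
  field_simp
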